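/- Let m ≥ 2 and k ≥ 1, and consider a deck of m^k cards with its in and out m-shuffles I_m and O_m. For 1 ≤ j ≤ k let B_j = O_m^{j−1} I_m O_m^{−j} (composed left to right). Then conjugation by O_m cyclically permutes the B_j: the left-to-right composite O_m B_j O_m^{−1} (apply O_m first, then B_j, then O_m^{−1}) equals B_{j+1} for j = 1, …, k−1, and equals B_1 for j = k. -/

import Mathlib

/-- For `m ≥ 2`, `k ≥ 1`, with `O`, `I` the out and in `m`-shuffles on a
deck of `m^k` cards and `B j = O^(j−1) I O^(−j)` (composed left to right; in Mathlib's
right-to-left convention `(O⁻¹)^j * I * O^(j−1)`) for `1 ≤ j ≤ k`: the left-to-right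
composite `O B_j O⁻¹` (apply `O` first, then `B j`, then `O⁻¹`; in Mathlib's convention
`O⁻¹ * B j * O`) equals `B (j+1)` for `j = 1, …, k−1` and equals `B 1` for `j = k`. -/
theorem O_conjugates_B_cyclically (m k : ℕ) (hm : 2 ≤ m) (hk : 1 ≤ k)
    (O I : Equiv.Perm (Fin (m ^ k)))
    (hO : ∀ i : Fin (m ^ k),
      (O i : ℕ) = m * ((i : ℕ) % m ^ (k - 1)) + (i : ℕ) / m ^ (k - 1))
    (hI : ∀ i : Fin (m ^ k),
      (I i : ℕ) = m * ((i : ℕ) % m ^ (k - 1)) + (m - 1 - (i : ℕ) / m ^ (k - 1)))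
    (B : ℕ → Equiv.Perm (Fin (m ^ k)))
    (hB : ∀ j, B j = (O⁻¹) ^ j * I * O ^ (j - 1)) :
    (∀ j, 1 ≤ j → j ≤ k - 1 → O⁻¹ * B j * O = B (j + 1)) ∧
    O⁻¹ * B k * O = B 1 := by
  have hmpos : 0 < m := by omega
  have hNpos : 0 < m ^ k := pow_pos hmpos k
  have hnpos : 0 < m ^ (k - 1) := pow_pos hmpos _
  set n := m ^ (k - 1) with hn
  have hk1 : m ^ k = m * n := by
    rw [hn, ← pow_succ']
    congr 1
    omega
  set M := m ^ k - 1 with hMdef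
  have hMN : m ^ k = M + 1 := (Nat.succ_pred_eq_of_pos hNpos).symm
  -- O x ≡ m * x  (mod M)
  have hstep : ∀ x : Fin (m ^ k), (O x : ℕ) ≡ m * (x : ℕ) [MOD M] := by
    intro x
    have hx : m * (x : ℕ) = (O x : ℕ) + M * ((x : ℕ) / n) := by
      have hmn : m * n = M + 1 := by rw [← hk1]; exact hMN
      have hqr : n * ((x : ℕ) / n) + (x : ℕ) % n = (x : ℕ) := Nat.div_add_mod _ _
      have hOx : (O x : ℕ) = m * ((x : ℕ) % n) + (x : ℕ) / n := hO x
      calc m * (x : ℕ) = m * (n * ((x : ℕ) / n) + (x : ℕ) % n) := by rw [hqr]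
        _ = (m * n) * ((x : ℕ) / n) + m * ((x : ℕ) % n) := by ring
        _ = (M + 1) * ((x : ℕ) / n) + m * ((x : ℕ) % n) := by rw [hmn]
        _ = (O x : ℕ) + M * ((x : ℕ) / n) := by rw [hOx]; ring
    show (O x : ℕ) % M = (m * (x : ℕ)) % M
    rw [hx, Nat.add_mul_mod_self_left]
  -- iterate: O^j x ≡ m^j * x  (mod M)
  have hiter : ∀ (j : ℕ) (x : Fin (m ^ k)),
      (((O ^ j) x : ℕ)) ≡ m ^ j * (x : ℕ) [MOD M] := by
    intro j
    induction j with
    | zero => intro x; simp [Nat.ModEq.refl]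
    | succ j ih =>
      intro x
      have h1 : (O ^ (j + 1)) x = O ((O ^ j) x) := by
        rw [pow_succ']; rfl
      rw [h1]
      calc (O ((O ^ j) x) : ℕ) ≡ m * (((O ^ j) x : ℕ)) [MOD M] := hstep _
        _ ≡ m * (m ^ j * (x : ℕ)) [MOD M] := (ih x).mul_left m
        _ = m ^ (j + 1) * (x : ℕ) := by ring
  -- fixed points propagate through powers
  have hfixpow : ∀ (x : Fin (m ^ k)), O x = x → ∀ j, (O ^ j) x = x := by
    intro x hx j
    induction j with
    | zero => simp
    | succ j ih =>
      have h1 : (O ^ (j + 1)) x = (O ^ j) (O x) := by rw [pow_succ]; rfl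
      rw [h1, hx, ih]
  -- O fixes 0 and M
  have hfix0 : ∀ x : Fin (m ^ k), (x : ℕ) = 0 → O x = x := by
    intro x hx
    apply Fin.ext
    rw [hO x, hx]
    simp
  have hfixM : ∀ x : Fin (m ^ k), (x : ℕ) = M → O x = x := by
    intro x hx
    obtain ⟨m', rfl⟩ : ∃ m', m = m' + 1 := ⟨m - 1, by omega⟩
    obtain ⟨n', hn'⟩ : ∃ n', n = n' + 1 := ⟨n - 1, by omega⟩
    have hMeq : M = n * m' + n' := by
      have h1 : (m' + 1) * n = m' * n + n := by ring
      have h2 : n * m' = m' * n := by ring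
      omega
    apply Fin.ext
    rw [hO x]
    show (m' + 1) * ((x : ℕ) % n) + (x : ℕ) / n = (x : ℕ)
    rw [hx, hMeq]
    have hmod : (n * m' + n') % n = n' := by
      rw [Nat.mul_add_mod]
      exact Nat.mod_eq_of_lt (by omega)
    have hdiv : (n * m' + n') / n = m' := by
      rw [Nat.mul_add_div hnpos, Nat.div_eq_of_lt (by omega)]
      omega
    rw [hmod, hdiv]
    have h1 : (m' + 1) * n' = m' * n' + n' := by ring
    have h2 : n * m' = m' * n' + m' := by rw [hn']; ring
    omega
  -- O^k = 1
  have hOk : O ^ k = 1 := by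
    ext x
    show (((O ^ k) x : Fin (m ^ k)) : ℕ) = ((1 : Equiv.Perm (Fin (m ^ k))) x : ℕ)
    rw [Equiv.Perm.one_apply]
    by_cases h0 : (x : ℕ) = 0
    · rw [hfixpow x (hfix0 x h0) k]
    · by_cases hM : (x : ℕ) = M
      · rw [hfixpow x (hfixM x hM) k]
      · have hxlt : (x : ℕ) < M := by
          have := x.isLt
          omega
        have hcong := hiter k x
        have hmk : m ^ k ≡ 1 [MOD M] := by
          show m ^ k % M = 1 % M
          rw [hMN, Nat.add_mod_left]
        have hy : (((O ^ k) x : ℕ)) ≡ (x : ℕ) [MOD M] := by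
          calc (((O ^ k) x : ℕ)) ≡ m ^ k * (x : ℕ) [MOD M] := hcong
            _ ≡ 1 * (x : ℕ) [MOD M] := hmk.mul_right _
            _ = (x : ℕ) := one_mul _
        have hylt : (((O ^ k) x : ℕ)) < M + 1 := by
          have := ((O ^ k) x).isLt
          omega
        have hy' : (((O ^ k) x : ℕ)) % M = (x : ℕ) := by
          have := hy
          unfold Nat.ModEq at this
          rwa [Nat.mod_eq_of_lt hxlt] at this
        rcases Nat.lt_or_ge (((O ^ k) x : ℕ)) M with h | h
        · rw [Nat.mod_eq_of_lt h] at hy'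
          exact hy'
        · have heq : (((O ^ k) x : ℕ)) = M := by omega
          rw [heq, Nat.mod_self] at hy'
          omega
  constructor
  · intro j hj _
    rw [hB, hB]
    have h1 : j + 1 - 1 = j := by omega
    have h2 : j - 1 + 1 = j := by omega
    rw [h1]
    calc O⁻¹ * ((O⁻¹) ^ j * I * O ^ (j - 1)) * O
        = (O⁻¹ * (O⁻¹) ^ j) * I * (O ^ (j - 1) * O) := by group
      _ = (O⁻¹) ^ (j + 1) * I * O ^ j := by
          rw [← pow_succ' O⁻¹, ← pow_succ O, h2]
  · rw [hB, hB]
    have hOinvk : (O⁻¹) ^ k = 1 := by rw [inv_pow, hOk, inv_one]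
    have hOk1 : O ^ (k - 1) * O = 1 := by
      rw [← pow_succ, show k - 1 + 1 = k by omega, hOk]
    calc O⁻¹ * ((O⁻¹) ^ k * I * O ^ (k - 1)) * O
        = O⁻¹ * (O⁻¹) ^ k * I * (O ^ (k - 1) * O) := by group
      _ = O⁻¹ * 1 * I * 1 := by rw [hOinvk, hOk1]
      _ = (O⁻¹) ^ 1 * I * O ^ (1 - 1) := by simp
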